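/- arXiv:1408.1000 — 2 statements merged into one kernel-verified Lean document; each statement's English description precedes it below -/
import Mathlib

section
/- Let X be a Poisson random variable with parameter λ > 0 and let 0 < α ≤ 1. Then |E[X^α] − λ^α| ≤ min{λ^α, λ^{α−1}}; moreover E[X^α] ≤ λ^α, so the difference λ^α − E[X^α] is nonnegative. -/
open Real

/-- The probability mass function of the Poisson distribution with parameter `lam`. -/
noncomputable def poissonPMF (lam : ℝ) (i : ℕ) : ℝ :=
  Real.exp (-lam) * lam ^ i / (Nat.factorial i)

/-- The expectation of `f X` where `X ~ Poisson(lam)`. -/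
noncomputable def poissonE (lam : ℝ) (f : ℕ → ℝ) : ℝ :=
  ∑' i : ℕ, poissonPMF lam i * f i

/-- Bernoulli's inequality for exponents in `[-1, 0]`. -/
lemma bernoulli_neg {s p : ℝ} (hs : -1 < s) (hp0 : -1 ≤ p) (hp1 : p ≤ 0) :
    1 + p * s ≤ (1 + s) ^ p := by
  have hs1 : 0 < 1 + s := by linarith
  have hq0 : 0 ≤ -p := by linarith
  have hq1 : -p ≤ 1 := by linarith
  have hB : (1 + s) ^ (-p) ≤ 1 + (-p) * s :=
    rpow_one_add_le_one_add_mul_self hs.le hq0 hq1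
  have hpos : (0:ℝ) < (1 + s) ^ (-p) := rpow_pos_of_pos hs1 _
  have hrw : (1 + s) ^ p = ((1 + s) ^ (-p))⁻¹ := by
    rw [← Real.rpow_neg hs1.le, neg_neg]
  rcases le_or_gt (1 + p * s) 0 with h | h
  · exact h.trans (rpow_pos_of_pos hs1 p).le
  · rw [hrw, le_inv_comm₀ h hpos]
    calc (1 + s) ^ (-p) ≤ 1 + (-p) * s := hB
      _ ≤ (1 + p * s)⁻¹ := by
        rw [inv_eq_one_div, le_div_iff₀ h]
        nlinarith [sq_nonneg (p * s)]

/-- Tangent-line bound for the concave function `x ^ α`, `0 ≤ α ≤ 1`. -/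
lemma tangent_concave {y x α : ℝ} (hy : 0 < y) (hx : 0 ≤ x)
    (hα0 : 0 ≤ α) (hα1 : α ≤ 1) :
    x ^ α ≤ y ^ α + α * y ^ (α - 1) * (x - y) := by
  have hs : -1 ≤ x / y - 1 := by
    have : 0 ≤ x / y := div_nonneg hx hy.le
    linarith
  have hB : (1 + (x / y - 1)) ^ α ≤ 1 + α * (x / y - 1) :=
    rpow_one_add_le_one_add_mul_self hs hα0 hα1
  have h1 : (1 + (x / y - 1)) = x / y := by ring
  rw [h1, Real.div_rpow hx hy.le] at hB
  have hyα : (0:ℝ) < y ^ α := rpow_pos_of_pos hy _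
  have h2 : x ^ α ≤ y ^ α * (1 + α * (x / y - 1)) := by
    calc x ^ α = y ^ α * (x ^ α / y ^ α) := by field_simp
      _ ≤ y ^ α * (1 + α * (x / y - 1)) := by
          exact mul_le_mul_of_nonneg_left hB hyα.le
  have h3 : y ^ α * (1 + α * (x / y - 1)) = y ^ α + α * y ^ (α - 1) * (x - y) := by
    rw [Real.rpow_sub hy, Real.rpow_one]
    field_simp
  linarith [h2, h3.symm.le]

/-- Tangent-line bound for the convex function `x ^ p`, `-1 ≤ p ≤ 0`. -/
lemma tangent_convex {y x p : ℝ} (hy : 0 < y) (hx : 0 < x)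
    (hp0 : -1 ≤ p) (hp1 : p ≤ 0) :
    y ^ p + p * y ^ (p - 1) * (x - y) ≤ x ^ p := by
  have hs : -1 < x / y - 1 := by
    have : 0 < x / y := div_pos hx hy
    linarith
  have hB : 1 + p * (x / y - 1) ≤ (1 + (x / y - 1)) ^ p := bernoulli_neg hs hp0 hp1
  have h1 : (1 + (x / y - 1)) = x / y := by ring
  rw [h1, Real.div_rpow hx.le hy.le] at hB
  have hyp : (0:ℝ) < y ^ p := rpow_pos_of_pos hy _
  have h2 : y ^ p * (1 + p * (x / y - 1)) ≤ x ^ p := by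
    calc y ^ p * (1 + p * (x / y - 1)) ≤ y ^ p * (x ^ p / y ^ p) :=
          mul_le_mul_of_nonneg_left hB hyp.le
      _ = x ^ p := by field_simp
  have h3 : y ^ p * (1 + p * (x / y - 1)) = y ^ p + p * y ^ (p - 1) * (x - y) := by
    rw [Real.rpow_sub hy, Real.rpow_one]
    field_simp
  linarith [h2, h3.symm.le]

lemma poissonPMF_nonneg {lam : ℝ} (hlam : 0 < lam) (n : ℕ) : 0 ≤ poissonPMF lam n := by
  unfold poissonPMF
  positivity

lemma poissonPMF_summable {lam : ℝ} : Summable (poissonPMF lam) := by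
  have h := (Real.summable_pow_div_factorial lam).mul_left (Real.exp (-lam))
  refine h.congr fun n => ?_
  simp [poissonPMF, mul_div_assoc]

lemma poissonPMF_tsum {lam : ℝ} : ∑' n, poissonPMF lam n = 1 := by
  have h1 : ∑' n : ℕ, lam ^ n / n.factorial = Real.exp lam := by
    rw [Real.exp_eq_exp_ℝ, NormedSpace.exp_eq_tsum_div]
  have h2 : (fun n : ℕ => poissonPMF lam n)
      = fun n : ℕ => Real.exp (-lam) * (lam ^ n / n.factorial) := by
    funext n; simp [poissonPMF, mul_div_assoc]
  rw [h2, tsum_mul_left, h1, ← Real.exp_add]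
  simp

lemma poissonPMF_shift {lam : ℝ} (n : ℕ) :
    poissonPMF lam (n + 1) * ((n : ℝ) + 1) = lam * poissonPMF lam n := by
  unfold poissonPMF
  rw [Nat.factorial_succ]
  have h1 : ((n : ℝ) + 1) ≠ 0 := by positivity
  have h2 : ((n.factorial : ℝ)) ≠ 0 := by positivity
  push_cast
  field_simp
  ring

lemma poissonPMF_mul_summable {lam : ℝ} : Summable (fun n => poissonPMF lam n * n) := by
  have h : Summable (fun n : ℕ => poissonPMF lam (n + 1) * ((n + 1 : ℕ) : ℝ)) := by
    refine ((poissonPMF_summable (lam := lam)).mul_left lam).congr fun n => ?_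
    push_cast
    exact (poissonPMF_shift n).symm
  exact (summable_nat_add_iff 1).mp h

lemma poissonPMF_mul_tsum {lam : ℝ} (hlam : 0 < lam) :
    ∑' n, poissonPMF lam n * n = lam := by
  rw [Summable.tsum_eq_zero_add poissonPMF_mul_summable]
  simp only [Nat.cast_zero, mul_zero, zero_add]
  have h1 : (fun n : ℕ => poissonPMF lam (n + 1) * ((n + 1 : ℕ) : ℝ))
      = fun n : ℕ => lam * poissonPMF lam n := by
    funext n
    push_cast
    exact poissonPMF_shift n
  rw [h1, tsum_mul_left, poissonPMF_tsum, mul_one]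

theorem poisson_rpow_bias_bound_le_one (lam : ℝ) (hlam : 0 < lam)
    (α : ℝ) (hα0 : 0 < α) (hα1 : α ≤ 1) :
    |poissonE lam (fun i => (i : ℝ) ^ α) - lam ^ α| ≤ min (lam ^ α) (lam ^ (α - 1)) ∧
    poissonE lam (fun i => (i : ℝ) ^ α) ≤ lam ^ α := by
  have hp := fun n => poissonPMF_nonneg hlam n
  have hSp : Summable (poissonPMF lam) := poissonPMF_summable
  have hSq : Summable (fun n => poissonPMF lam n * n) := poissonPMF_mul_summable
  set E := poissonE lam (fun i => (i : ℝ) ^ α) with hE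
  -- summability of the main series
  have hpt_le : ∀ n : ℕ, (n : ℝ) ^ α ≤ (n : ℝ) + 1 := by
    intro n
    rcases Nat.eq_zero_or_pos n with h | h
    · subst h; simp [Real.zero_rpow hα0.ne']
    · have h1 : (1:ℝ) ≤ (n : ℝ) := by exact_mod_cast h
      calc (n : ℝ) ^ α ≤ (n : ℝ) ^ (1:ℝ) :=
            Real.rpow_le_rpow_of_exponent_le h1 hα1
        _ = (n : ℝ) := Real.rpow_one _
        _ ≤ (n : ℝ) + 1 := by linarith
  have hSmaj : Summable (fun n => poissonPMF lam n * ((n:ℝ) + 1)) := by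
    refine (hSq.add hSp).congr fun n => ?_
    ring
  have hSE : Summable (fun n : ℕ => poissonPMF lam n * (n : ℝ) ^ α) := by
    refine Summable.of_nonneg_of_le (fun n => ?_) (fun n => ?_) hSmaj
    · exact mul_nonneg (hp n) (Real.rpow_nonneg (Nat.cast_nonneg n) α)
    · exact mul_le_mul_of_nonneg_left (hpt_le n) (hp n)
  have hEdef : E = ∑' n : ℕ, poissonPMF lam n * (n : ℝ) ^ α := rfl
  -- E ≥ 0
  have hE0 : 0 ≤ E := by
    rw [hEdef]
    exact tsum_nonneg fun n =>
      mul_nonneg (hp n) (Real.rpow_nonneg (Nat.cast_nonneg n) α)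
  -- helper: tsum of p n * (c + d*(n - lam)) = c for any c d
  have htsum_lin : ∀ c d : ℝ,
      Summable (fun n : ℕ => poissonPMF lam n * (c + d * ((n:ℝ) - lam))) ∧
      ∑' n : ℕ, poissonPMF lam n * (c + d * ((n:ℝ) - lam)) = c := by
    intro c d
    have heq : (fun n : ℕ => poissonPMF lam n * (c + d * ((n:ℝ) - lam)))
        = fun n : ℕ => (c - d * lam) * poissonPMF lam n + d * (poissonPMF lam n * n) := by
      funext n; ring
    have hs : Summable (fun n : ℕ => (c - d * lam) * poissonPMF lam n
        + d * (poissonPMF lam n * n)) := (hSp.mul_left _).add (hSq.mul_left _)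
    constructor
    · rw [heq]; exact hs
    · rw [heq, Summable.tsum_add (hSp.mul_left _) (hSq.mul_left _), tsum_mul_left, tsum_mul_left,
        poissonPMF_tsum, poissonPMF_mul_tsum hlam]
      ring
  -- Upper bound: E ≤ lam ^ α
  have hub : E ≤ lam ^ α := by
    obtain ⟨hs, hv⟩ := htsum_lin (lam ^ α) (α * lam ^ (α - 1))
    rw [hEdef, ← hv]
    refine Summable.tsum_le_tsum (fun n => ?_) hSE hs
    refine mul_le_mul_of_nonneg_left ?_ (hp n)
    have := tangent_concave hlam (Nat.cast_nonneg n) hα0.le hα1 (x := (n:ℝ))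
    linarith
  -- Lower bound: lam ^ α - lam ^ (α - 1) ≤ E
  -- Step 1: E = lam * T where T = ∑' p n * (n+1)^(α-1)
  have hT_pt : ∀ n : ℕ, (0:ℝ) ≤ ((n:ℝ) + 1) ^ (α - 1) ∧ ((n:ℝ) + 1) ^ (α - 1) ≤ 1 := by
    intro n
    have h1 : (1:ℝ) ≤ (n:ℝ) + 1 := le_add_of_nonneg_left (Nat.cast_nonneg n)
    exact ⟨Real.rpow_nonneg (by positivity) _,
      Real.rpow_le_one_of_one_le_of_nonpos h1 (by linarith)⟩
  have hST : Summable (fun n : ℕ => poissonPMF lam n * ((n:ℝ) + 1) ^ (α - 1)) := by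
    refine Summable.of_nonneg_of_le (fun n => mul_nonneg (hp n) (hT_pt n).1)
      (fun n => ?_) hSp
    calc poissonPMF lam n * ((n:ℝ) + 1) ^ (α - 1)
        ≤ poissonPMF lam n * 1 := mul_le_mul_of_nonneg_left (hT_pt n).2 (hp n)
      _ = poissonPMF lam n := mul_one _
  set T := ∑' n : ℕ, poissonPMF lam n * ((n:ℝ) + 1) ^ (α - 1) with hT
  have hET : E = lam * T := by
    rw [hEdef, Summable.tsum_eq_zero_add hSE]
    have h0 : poissonPMF lam 0 * ((0:ℕ) : ℝ) ^ α = 0 := by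
      simp [Real.zero_rpow hα0.ne']
    rw [h0, zero_add, hT, ← tsum_mul_left]
    congr 1
    funext n
    have hn1 : (0:ℝ) < (n:ℝ) + 1 := by positivity
    have hx : ((n + 1 : ℕ) : ℝ) ^ α = ((n:ℝ) + 1) * ((n:ℝ) + 1) ^ (α - 1) := by
      have h := Real.rpow_add hn1 1 (α - 1)
      rw [Real.rpow_one] at h
      rw [show (1:ℝ) + (α - 1) = α by ring] at h
      push_cast
      exact h
    rw [hx, ← mul_assoc, show poissonPMF lam (n + 1) * ((n:ℝ) + 1)
        = lam * poissonPMF lam n from poissonPMF_shift n]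
    ring
  -- Step 2: T ≥ (lam + 1) ^ (α - 1)
  have hTlb : (lam + 1) ^ (α - 1) ≤ T := by
    have hμ : (0:ℝ) < lam + 1 := by linarith
    -- tsum of tangent line at lam+1, centered so correction vanishes
    have heq : ∀ n : ℕ, (lam + 1) ^ (α - 1)
          + (α - 1) * (lam + 1) ^ (α - 1 - 1) * ((n:ℝ) - lam)
        ≤ ((n:ℝ) + 1) ^ (α - 1) := by
      intro n
      have := tangent_convex hμ (x := (n:ℝ) + 1) (p := α - 1)
        (by positivity) (by linarith) (by linarith)
      have h2 : ((n:ℝ) + 1) - (lam + 1) = (n:ℝ) - lam := by ring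
      rw [h2] at this
      exact this
    obtain ⟨hs, hv⟩ := htsum_lin ((lam + 1) ^ (α - 1))
      ((α - 1) * (lam + 1) ^ (α - 1 - 1))
    rw [hT, ← hv]
    refine Summable.tsum_le_tsum (fun n => ?_) hs hST
    exact mul_le_mul_of_nonneg_left (heq n) (hp n)
  -- Step 3: lam * (lam + 1) ^ (α - 1) ≥ lam ^ α - lam ^ (α - 1)
  have hfinal : lam ^ α - lam ^ (α - 1) ≤ lam * (lam + 1) ^ (α - 1) := by
    have hμ : (0:ℝ) < lam + 1 := by linarith
    set B := lam ^ (α - 1) with hB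
    set C := (lam + 1) ^ (α - 1) with hC
    have hBpos : 0 < B := rpow_pos_of_pos hlam _
    have hCpos : 0 < C := rpow_pos_of_pos hμ _
    have hA : lam ^ α = B * lam := by
      rw [hB, Real.rpow_sub hlam, Real.rpow_one]
      field_simp
    have hw : C = B * ((lam + 1) / lam) ^ (α - 1) := by
      rw [hB, hC, ← Real.mul_rpow hlam.le (by positivity)]
      congr 1
      field_simp
    have hr : lam / (lam + 1) ≤ ((lam + 1) / lam) ^ (α - 1) := by
      have h1 : ((lam + 1) / lam) ^ (α - 1) = (lam / (lam + 1)) ^ (1 - α) := by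
        rw [show (α - 1 : ℝ) = -(1 - α) by ring, Real.rpow_neg (by positivity),
          ← Real.inv_rpow (by positivity), inv_div]
      rw [h1]
      have hbase0 : 0 < lam / (lam + 1) := by positivity
      have hbase1 : lam / (lam + 1) ≤ 1 := by
        rw [div_le_one hμ]; linarith
      calc lam / (lam + 1) = (lam / (lam + 1)) ^ (1:ℝ) := (Real.rpow_one _).symm
        _ ≤ (lam / (lam + 1)) ^ (1 - α) :=
            Real.rpow_le_rpow_of_exponent_ge hbase0 hbase1 (by linarith)
    have hCB : B * (lam / (lam + 1)) ≤ C := by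
      rw [hw]
      exact mul_le_mul_of_nonneg_left hr hBpos.le
    -- want: B * lam - B ≤ lam * C
    rw [hA]
    have h2 : lam * (B * (lam / (lam + 1))) ≤ lam * C :=
      mul_le_mul_of_nonneg_left hCB hlam.le
    have h3 : B * lam - B ≤ lam * (B * (lam / (lam + 1))) := by
      have h5 : lam * (B * (lam / (lam + 1))) - (B * lam - B) = B / (lam + 1) := by
        field_simp
        ring
      nlinarith [div_nonneg hBpos.le hμ.le, h5]
    linarith
  have hlb : lam ^ α - lam ^ (α - 1) ≤ E := by
    rw [hET]
    calc lam ^ α - lam ^ (α - 1) ≤ lam * (lam + 1) ^ (α - 1) := hfinal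
      _ ≤ lam * T := mul_le_mul_of_nonneg_left hTlb hlam.le
  refine ⟨?_, hub⟩
  rw [abs_of_nonpos (by linarith), le_min_iff]
  constructor <;> linarith
end

section
/- Let 0 < α < 1, let p be a probability distribution over an alphabet of k elements, let n > 0, and let (N_x)_x be independent with N_x ~ Poisson(n p_x). Then the bias of the empirical power-sum estimator satisfies | E[ Σ_x (N_x/n)^α ] − P_α(p) | ≤ 2 k / n^α ≤ 2 P_α(p) · (k^{1/α}/n)^α. -/
open MeasureTheory ProbabilityTheory Real

/-- `p` is a probability distribution on a finite alphabet. -/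
def IsDist {X : Type*} [Fintype X] (p : X → ℝ) : Prop :=
  (∀ x, 0 ≤ p x) ∧ ∑ x, p x = 1

section Aux


lemma rpow_le_one_add_mul' {γ u : ℝ} (hγ0 : 0 ≤ γ) (hγ1 : γ ≤ 1) (hu : 0 ≤ u) :
    u ^ γ ≤ 1 + γ * (u - 1) := by
  have h := Real.geom_mean_le_arith_mean2_weighted hγ0 (by linarith : (0:ℝ) ≤ 1 - γ)
    hu zero_le_one (by ring)
  rw [Real.one_rpow, mul_one] at h
  linarith

lemma quad_bound {α u : ℝ} (hα0 : 0 < α) (hα1 : α < 1) (hu : 0 ≤ u) :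
    1 + α * (u - 1) - u ^ α ≤ 2 * (u - 1) ^ 2 := by
  rcases eq_or_lt_of_le hu with h | hu0
  · rw [← h, Real.zero_rpow (ne_of_gt hα0)]
    nlinarith
  · set D : ℝ := 1 + (1 - α) * (u - 1) with hD
    have hDα : α ≤ D := by nlinarith
    have hDpos : 0 < D := lt_of_lt_of_le hα0 hDα
    have h1 : u ^ (1 - α) ≤ D := rpow_le_one_add_mul' (by linarith) (by linarith) hu
    have h2 : u ^ α * u ^ (1 - α) = u := by
      rw [← Real.rpow_add hu0]; simp
    have h3 : u / D ≤ u ^ α := by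
      rw [div_le_iff₀ hDpos]
      calc u = u ^ α * u ^ (1 - α) := h2.symm
        _ ≤ u ^ α * D := mul_le_mul_of_nonneg_left h1 (Real.rpow_nonneg hu α)
    have e : 1 + α * (u - 1) - u / D = α * (1 - α) * (u - 1) ^ 2 / D := by
      field_simp
      ring
    have key : 1 + α * (u - 1) - u / D ≤ 2 * (u - 1) ^ 2 := by
      rw [e, div_le_iff₀ hDpos]
      have h4 : 2 * (u - 1) ^ 2 * α ≤ 2 * (u - 1) ^ 2 * D :=
        mul_le_mul_of_nonneg_left hDα (by positivity)
      nlinarith [mul_nonneg (mul_nonneg hα0.le (sq_nonneg (u - 1))) hα0.le,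
        mul_nonneg hα0.le (sq_nonneg (u - 1))]
    linarith

lemma pmf_eq (lam : ℝ) (i : ℕ) :
    _root_.poissonPMF lam i = Real.exp (-lam) * (lam ^ i / i.factorial) := by
  unfold _root_.poissonPMF; ring

lemma pmf_nonneg {lam : ℝ} (h : 0 ≤ lam) (i : ℕ) : 0 ≤ _root_.poissonPMF lam i := by
  unfold _root_.poissonPMF; positivity

lemma summable_pmf (lam : ℝ) : Summable (_root_.poissonPMF lam) :=
  ((Real.summable_pow_div_factorial lam).mul_left _).congr fun i => (pmf_eq lam i).symm

lemma tsum_pmf (lam : ℝ) : ∑' i, _root_.poissonPMF lam i = 1 := by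
  simp only [pmf_eq]
  rw [tsum_mul_left]
  have h : ∑' i : ℕ, lam ^ i / (i.factorial : ℝ) = Real.exp lam := by
    rw [Real.exp_eq_exp_ℝ, NormedSpace.exp_eq_tsum_div]
  rw [h, ← Real.exp_add]
  simp

lemma pmf_shift (lam : ℝ) (i : ℕ) :
    _root_.poissonPMF lam (i + 1) * ((i : ℝ) + 1) = lam * _root_.poissonPMF lam i := by
  unfold _root_.poissonPMF
  rw [Nat.factorial_succ]
  have h1 : ((i.factorial : ℝ)) ≠ 0 := Nat.cast_ne_zero.2 i.factorial_ne_zero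
  have h2 : ((i : ℝ) + 1) ≠ 0 := by positivity
  push_cast
  field_simp
  ring

lemma summable_mean (lam : ℝ) : Summable (fun i => _root_.poissonPMF lam i * i) := by
  rw [← summable_nat_add_iff 1]
  refine ((summable_pmf lam).mul_left lam).congr fun i => ?_
  push_cast
  exact (pmf_shift lam i).symm

lemma tsum_mean (lam : ℝ) : ∑' i, _root_.poissonPMF lam i * i = lam := by
  rw [Summable.tsum_eq_zero_add (summable_mean lam)]
  have h : ∀ i : ℕ, _root_.poissonPMF lam (i + 1) * ((i + 1 : ℕ) : ℝ) = lam * _root_.poissonPMF lam i := by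
    intro i; push_cast; exact pmf_shift lam i
  simp only [Nat.cast_zero, mul_zero, zero_add]
  rw [tsum_congr h, tsum_mul_left, tsum_pmf, mul_one]

lemma pmf_shift2 (lam : ℝ) (i : ℕ) :
    _root_.poissonPMF lam (i + 2) * (((i : ℝ) + 2) * ((i : ℝ) + 1)) = lam ^ 2 * _root_.poissonPMF lam i := by
  unfold _root_.poissonPMF
  rw [show i + 2 = (i + 1) + 1 from rfl, Nat.factorial_succ, Nat.factorial_succ]
  have h1 : ((i.factorial : ℝ)) ≠ 0 := Nat.cast_ne_zero.2 i.factorial_ne_zero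
  have h2 : ((i : ℝ) + 1) ≠ 0 := by positivity
  have h3 : ((i : ℝ) + 1 + 1) ≠ 0 := by positivity
  push_cast
  field_simp
  ring

lemma summable_fact2 (lam : ℝ) :
    Summable (fun i : ℕ => _root_.poissonPMF lam i * ((i : ℝ) * ((i : ℝ) - 1))) := by
  rw [← summable_nat_add_iff 2]
  refine ((summable_pmf lam).mul_left (lam ^ 2)).congr fun i => ?_
  push_cast
  rw [← pmf_shift2 lam i]
  ring

lemma tsum_fact2 (lam : ℝ) :
    ∑' i, _root_.poissonPMF lam i * ((i : ℝ) * ((i : ℝ) - 1)) = lam ^ 2 := by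
  rw [Summable.tsum_eq_zero_add (summable_fact2 lam)]
  have hs1 : Summable (fun i : ℕ => _root_.poissonPMF lam (i + 1) * (((i + 1 : ℕ) : ℝ) * (((i + 1 : ℕ) : ℝ) - 1))) := by
    exact (summable_nat_add_iff 1).2 (summable_fact2 lam)
  rw [Summable.tsum_eq_zero_add hs1]
  have h : ∀ i : ℕ, _root_.poissonPMF lam (i + 1 + 1) * (((i + 1 + 1 : ℕ) : ℝ) * (((i + 1 + 1 : ℕ) : ℝ) - 1))
      = lam ^ 2 * _root_.poissonPMF lam i := by
    intro i
    rw [← pmf_shift2 lam i]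
    push_cast
    ring
  rw [tsum_congr h, tsum_mul_left, tsum_pmf]
  norm_num

lemma summable_sq (lam : ℝ) :
    Summable (fun i : ℕ => _root_.poissonPMF lam i * ((i : ℝ) - lam) ^ 2) := by
  have h : (fun i : ℕ => _root_.poissonPMF lam i * ((i : ℝ) - lam) ^ 2)
      = fun i : ℕ => _root_.poissonPMF lam i * ((i : ℝ) * ((i : ℝ) - 1))
        + ((1 - 2 * lam) * (_root_.poissonPMF lam i * i) + lam ^ 2 * _root_.poissonPMF lam i) := by
    funext i; ring
  rw [h]
  exact (summable_fact2 lam).add (((summable_mean lam).mul_left _).add ((summable_pmf lam).mul_left _))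

lemma tsum_sq (lam : ℝ) :
    ∑' i : ℕ, _root_.poissonPMF lam i * ((i : ℝ) - lam) ^ 2 = lam := by
  have h : (fun i : ℕ => _root_.poissonPMF lam i * ((i : ℝ) - lam) ^ 2)
      = fun i : ℕ => _root_.poissonPMF lam i * ((i : ℝ) * ((i : ℝ) - 1))
        + ((1 - 2 * lam) * (_root_.poissonPMF lam i * i) + lam ^ 2 * _root_.poissonPMF lam i) := by
    funext i; ring
  rw [h, Summable.tsum_add (summable_fact2 lam)
      (((summable_mean lam).mul_left _).add ((summable_pmf lam).mul_left _)),
    Summable.tsum_add ((summable_mean lam).mul_left _) ((summable_pmf lam).mul_left _),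
    tsum_mul_left, tsum_mul_left, tsum_fact2, tsum_mean, tsum_pmf]
  ring

section Moment
variable {lam α : ℝ}

lemma summable_alpha (hlam : 0 ≤ lam) (hα0 : 0 < α) (hα1 : α < 1) :
    Summable (fun i : ℕ => _root_.poissonPMF lam i * (i : ℝ) ^ α) := by
  refine Summable.of_nonneg_of_le
    (fun i => mul_nonneg (pmf_nonneg hlam i) (Real.rpow_nonneg (Nat.cast_nonneg i) α))
    (fun i => ?_) ((summable_pmf lam).add (summable_mean lam))
  have h : (i : ℝ) ^ α ≤ 1 + (i : ℝ) := by
    have hb := rpow_le_one_add_mul' hα0.le hα1.le (Nat.cast_nonneg i)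
    nlinarith [Nat.cast_nonneg (α := ℝ) i]
  calc _root_.poissonPMF lam i * (i : ℝ) ^ α ≤ _root_.poissonPMF lam i * (1 + i) :=
        mul_le_mul_of_nonneg_left h (pmf_nonneg hlam i)
    _ = _root_.poissonPMF lam i + _root_.poissonPMF lam i * i := by ring

/-- Pointwise tangent bound, multiplied up. -/
lemma pointwise_tangent (hlam : 0 < lam) (hα0 : 0 < α) (hα1 : α < 1) (i : ℕ) :
    (i : ℝ) ^ α ≤ lam ^ α + α * lam ^ (α - 1) * ((i : ℝ) - lam) := by
  have hA : (0:ℝ) < lam ^ α := Real.rpow_pos_of_pos hlam α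
  have hb := rpow_le_one_add_mul' hα0.le hα1.le
    (div_nonneg (Nat.cast_nonneg i) hlam.le)
  have hd : ((i : ℝ) / lam) ^ α = (i : ℝ) ^ α / lam ^ α :=
    Real.div_rpow (Nat.cast_nonneg i) hlam.le α
  rw [hd] at hb
  have hB : lam ^ (α - 1) = lam ^ α / lam := Real.rpow_sub_one hlam.ne' α
  have := mul_le_mul_of_nonneg_left hb hA.le
  rw [mul_div_cancel₀ _ hA.ne'] at this
  calc (i : ℝ) ^ α ≤ lam ^ α * (1 + α * ((i : ℝ) / lam - 1)) := this
    _ = lam ^ α + α * (lam ^ α / lam) * ((i : ℝ) - lam) := by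
        field_simp
    _ = lam ^ α + α * lam ^ (α - 1) * ((i : ℝ) - lam) := by rw [hB]

/-- Pointwise quadratic bound, multiplied up. -/
lemma pointwise_quad (hlam : 0 < lam) (hα0 : 0 < α) (hα1 : α < 1) (i : ℕ) :
    lam ^ α + α * lam ^ (α - 1) * ((i : ℝ) - lam) - (i : ℝ) ^ α
      ≤ 2 * lam ^ (α - 2) * ((i : ℝ) - lam) ^ 2 := by
  have hA : (0:ℝ) < lam ^ α := Real.rpow_pos_of_pos hlam α
  have hq := quad_bound hα0 hα1 (div_nonneg (Nat.cast_nonneg i) hlam.le)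
  have hd : ((i : ℝ) / lam) ^ α = (i : ℝ) ^ α / lam ^ α :=
    Real.div_rpow (Nat.cast_nonneg i) hlam.le α
  rw [hd] at hq
  have hB : lam ^ (α - 1) = lam ^ α / lam := Real.rpow_sub_one hlam.ne' α
  have hC : lam ^ (α - 2) = lam ^ α / lam ^ 2 := by
    rw [Real.rpow_sub hlam, ← Real.rpow_natCast lam 2]
    norm_num
  have := mul_le_mul_of_nonneg_left hq hA.le
  rw [hB, hC]
  calc lam ^ α + α * (lam ^ α / lam) * ((i : ℝ) - lam) - (i : ℝ) ^ α
      = lam ^ α * (1 + α * ((i : ℝ) / lam - 1) - (i : ℝ) ^ α / lam ^ α) := by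
        field_simp
    _ ≤ lam ^ α * (2 * ((i : ℝ) / lam - 1) ^ 2) := this
    _ = 2 * (lam ^ α / lam ^ 2) * ((i : ℝ) - lam) ^ 2 := by
        field_simp

lemma tsum_tangent (lam α : ℝ) :
    Summable (fun i : ℕ => lam ^ α * _root_.poissonPMF lam i
        + (α * lam ^ (α - 1)) * (_root_.poissonPMF lam i * i)
        - (α * lam ^ (α - 1) * lam) * _root_.poissonPMF lam i) ∧
    ∑' i : ℕ, (lam ^ α * _root_.poissonPMF lam i
        + (α * lam ^ (α - 1)) * (_root_.poissonPMF lam i * i)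
        - (α * lam ^ (α - 1) * lam) * _root_.poissonPMF lam i) = lam ^ α := by
  have hs : Summable _ := (((summable_pmf lam).mul_left (lam ^ α)).add
      ((summable_mean lam).mul_left (α * lam ^ (α - 1)))).sub
      ((summable_pmf lam).mul_left (α * lam ^ (α - 1) * lam))
  refine ⟨hs, ?_⟩
  rw [Summable.tsum_sub (((summable_pmf lam).mul_left _).add ((summable_mean lam).mul_left _))
      ((summable_pmf lam).mul_left _),
    Summable.tsum_add ((summable_pmf lam).mul_left _) ((summable_mean lam).mul_left _),
    tsum_mul_left, tsum_mul_left, tsum_mul_left, tsum_pmf, tsum_mean]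
  ring

lemma moment_upper (hlam : 0 ≤ lam) (hα0 : 0 < α) (hα1 : α < 1) :
    ∑' i : ℕ, _root_.poissonPMF lam i * (i : ℝ) ^ α ≤ lam ^ α := by
  rcases eq_or_lt_of_le hlam with h | hpos
  · have hz : ∀ i : ℕ, _root_.poissonPMF lam i * (i : ℝ) ^ α = 0 := by
      intro i
      cases i with
      | zero => simp [Real.zero_rpow hα0.ne']
      | succ m =>
        rw [← h]
        unfold _root_.poissonPMF
        simp
    rw [tsum_congr hz, tsum_zero, ← h, Real.zero_rpow hα0.ne']
  · have hpt : ∀ i : ℕ, _root_.poissonPMF lam i * (i : ℝ) ^ α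
        ≤ lam ^ α * _root_.poissonPMF lam i + (α * lam ^ (α - 1)) * (_root_.poissonPMF lam i * i)
          - (α * lam ^ (α - 1) * lam) * _root_.poissonPMF lam i := by
      intro i
      have := mul_le_mul_of_nonneg_left (pointwise_tangent hpos hα0 hα1 i)
        (pmf_nonneg hlam i)
      nlinarith [this]
    obtain ⟨hs, ht⟩ := tsum_tangent lam α
    calc ∑' i : ℕ, _root_.poissonPMF lam i * (i : ℝ) ^ α
        ≤ _ := Summable.tsum_le_tsum hpt (summable_alpha hlam hα0 hα1) hs
      _ = lam ^ α := ht

lemma moment_lower (hlam : 0 ≤ lam) (hα0 : 0 < α) (hα1 : α < 1) :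
    lam ^ α - ∑' i : ℕ, _root_.poissonPMF lam i * (i : ℝ) ^ α ≤ 2 := by
  rcases le_or_gt lam 1 with h1 | h1
  · have hM : 0 ≤ ∑' i : ℕ, _root_.poissonPMF lam i * (i : ℝ) ^ α :=
      tsum_nonneg fun i => mul_nonneg (pmf_nonneg hlam i) (Real.rpow_nonneg (Nat.cast_nonneg i) α)
    have : lam ^ α ≤ 1 := Real.rpow_le_one hlam h1 hα0.le
    linarith
  · have hpos : 0 < lam := lt_trans one_pos h1
    -- pointwise multiplied by pmf
    have hpt : ∀ i : ℕ,
        lam ^ α * _root_.poissonPMF lam i + (α * lam ^ (α - 1)) * (_root_.poissonPMF lam i * i)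
          - (α * lam ^ (α - 1) * lam) * _root_.poissonPMF lam i - _root_.poissonPMF lam i * (i : ℝ) ^ α
        ≤ (2 * lam ^ (α - 2)) * (_root_.poissonPMF lam i * ((i : ℝ) - lam) ^ 2) := by
      intro i
      have := mul_le_mul_of_nonneg_left (pointwise_quad hpos hα0 hα1 i) (pmf_nonneg hlam i)
      nlinarith [this]
    obtain ⟨hs, ht⟩ := tsum_tangent lam α
    have hsl : Summable (fun i : ℕ => lam ^ α * _root_.poissonPMF lam i
        + (α * lam ^ (α - 1)) * (_root_.poissonPMF lam i * i)
        - (α * lam ^ (α - 1) * lam) * _root_.poissonPMF lam i - _root_.poissonPMF lam i * (i : ℝ) ^ α) :=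
      hs.sub (summable_alpha hlam hα0 hα1)
    have hsr : Summable (fun i : ℕ => (2 * lam ^ (α - 2)) * (_root_.poissonPMF lam i * ((i : ℝ) - lam) ^ 2)) :=
      (summable_sq lam).mul_left _
    have hts := Summable.tsum_le_tsum hpt hsl hsr
    rw [Summable.tsum_sub hs (summable_alpha hlam hα0 hα1), ht, tsum_mul_left, tsum_sq] at hts
    -- RHS = 2 * lam ^ (α - 1) ≤ 2
    have hCB : lam ^ (α - 2) * lam = lam ^ (α - 1) := by
      have : lam ^ (α - 2) * lam ^ (1:ℝ) = lam ^ (α - 1) := by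
        rw [← Real.rpow_add hpos]; congr 1; ring
      rwa [Real.rpow_one] at this
    have hB1 : lam ^ (α - 1) ≤ 1 :=
      Real.rpow_le_one_of_one_le_of_nonpos h1.le (by linarith)
    have : 2 * lam ^ (α - 2) * lam = 2 * lam ^ (α - 1) := by rw [mul_assoc, hCB]
    rw [this] at hts
    linarith


lemma integral_rpow_eq_tsum {Ω : Type*} [MeasurableSpace Ω] (μ : Measure Ω)
    [IsProbabilityMeasure μ] (N : Ω → ℕ) (hN : Measurable N) {lam : ℝ} (hlam : 0 ≤ lam)
    (hpois : ∀ i, μ {ω | N ω = i} = ENNReal.ofReal (_root_.poissonPMF lam i))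
    {α : ℝ} (hα0 : 0 < α) (hα1 : α < 1) :
    Integrable (fun ω => ((N ω : ℝ)) ^ α) μ ∧
    ∫ ω, ((N ω : ℝ)) ^ α ∂μ = ∑' i : ℕ, _root_.poissonPMF lam i * (i : ℝ) ^ α := by
  set f : ℕ → ℝ := fun i => (i : ℝ) ^ α with hf
  have hfm : Measurable f := measurable_from_top
  set ν : Measure ℕ := μ.map N with hν
  have hνprob : IsProbabilityMeasure ν := Measure.isProbabilityMeasure_map hN.aemeasurable
  have hνs : ∀ i : ℕ, ν {i} = ENNReal.ofReal (_root_.poissonPMF lam i) := by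
    intro i
    rw [hν, Measure.map_apply hN (measurableSet_singleton i)]
    exact hpois i
  have hnn : ∀ i : ℕ, 0 ≤ _root_.poissonPMF lam i * f i :=
    fun i => mul_nonneg (pmf_nonneg hlam i) (Real.rpow_nonneg (Nat.cast_nonneg i) α)
  have hsum : Summable (fun i : ℕ => _root_.poissonPMF lam i * f i) := summable_alpha hlam hα0 hα1
  have hint : Integrable f ν := by
    refine ⟨hfm.aestronglyMeasurable, ?_⟩
    rw [hasFiniteIntegral_iff_norm, lintegral_countable']
    have he : ∀ i : ℕ, ENNReal.ofReal ‖f i‖ * ν {i} = ENNReal.ofReal (_root_.poissonPMF lam i * f i) := by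
      intro i
      have hfnn : 0 ≤ f i := Real.rpow_nonneg (Nat.cast_nonneg i) α
      rw [hνs i, Real.norm_of_nonneg hfnn, ← ENNReal.ofReal_mul hfnn]
      exact congrArg ENNReal.ofReal (mul_comm _ _)
    rw [tsum_congr he, ← ENNReal.ofReal_tsum_of_nonneg hnn hsum]
    exact ENNReal.ofReal_lt_top
  have hint2 : Integrable (fun ω => f (N ω)) μ :=
    (integrable_map_measure hfm.aestronglyMeasurable hN.aemeasurable).mp hint
  refine ⟨hint2, ?_⟩
  have h1 : ∫ ω, f (N ω) ∂μ = ∫ i, f i ∂ν := by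
    rw [hν, integral_map hN.aemeasurable hfm.aestronglyMeasurable]
  rw [h1, integral_countable' hint]
  refine tsum_congr fun i => ?_
  rw [measureReal_def, hνs i, ENNReal.toReal_ofReal (pmf_nonneg hlam i), smul_eq_mul]

end Moment

end Aux

/-- Bias bound for the empirical estimator of the power sum `P_α(p)` under Poisson sampling,
for real `0 < α < 1`. -/
theorem empirical_bias_bound_lt_one {X : Type*} [Fintype X] {k : ℕ}
    (hk : Fintype.card X = k)
    (p : X → ℝ) (hp : IsDist p) (n : ℝ) (hn : 0 < n)
    {Ω : Type*} [MeasurableSpace Ω] (μ : Measure Ω) [IsProbabilityMeasure μ]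
    (N : X → Ω → ℕ) (hmeas : ∀ x, Measurable (N x))
    (hindep : iIndepFun N μ)
    (hpois : ∀ x i, μ {ω | N x ω = i} = ENNReal.ofReal (poissonPMF (n * p x) i))
    (α : ℝ) (hα0 : 0 < α) (hα1 : α < 1) :
    |(∫ ω, (∑ x, ((N x ω : ℝ) / n) ^ α) ∂μ) - ∑ x, p x ^ α| ≤ 2 * k / n ^ α ∧
    2 * k / n ^ α ≤ 2 * (∑ x, p x ^ α) * ((k : ℝ) ^ (1 / α) / n) ^ α := by
  have hnα : (0:ℝ) < n ^ α := Real.rpow_pos_of_pos hn α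
  have hlam : ∀ x, 0 ≤ n * p x := fun x => mul_nonneg hn.le (hp.1 x)
  -- per-symbol facts
  have hIT : ∀ x : X, Integrable (fun ω => ((N x ω : ℝ)) ^ α) μ ∧
      ∫ ω, ((N x ω : ℝ)) ^ α ∂μ = ∑' i : ℕ, _root_.poissonPMF (n * p x) i * (i : ℝ) ^ α :=
    fun x => integral_rpow_eq_tsum μ (N x) (hmeas x) (hlam x) (hpois x) hα0 hα1
  have hdiv : ∀ (x : X) (ω : Ω), ((N x ω : ℝ) / n) ^ α = ((N x ω : ℝ)) ^ α / n ^ α :=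
    fun x ω => Real.div_rpow (Nat.cast_nonneg _) hn.le α
  have hint : ∀ x : X, Integrable (fun ω => ((N x ω : ℝ) / n) ^ α) μ := by
    intro x
    have := (hIT x).1.div_const (n ^ α)
    refine this.congr (Filter.Eventually.of_forall fun ω => ?_)
    exact (hdiv x ω).symm
  have hI : ∀ x : X, ∫ ω, ((N x ω : ℝ) / n) ^ α ∂μ
      = (∑' i : ℕ, _root_.poissonPMF (n * p x) i * (i : ℝ) ^ α) / n ^ α := by
    intro x
    rw [← (hIT x).2, ← integral_div]
    exact integral_congr_ae (Filter.Eventually.of_forall fun ω => hdiv x ω)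
  have hpα : ∀ x : X, p x ^ α = (n * p x) ^ α / n ^ α := by
    intro x
    rw [Real.mul_rpow hn.le (hp.1 x), mul_comm (n ^ α), mul_div_assoc,
      div_self hnα.ne', mul_one]
  have hd : ∀ x : X, 0 ≤ p x ^ α - ∫ ω, ((N x ω : ℝ) / n) ^ α ∂μ ∧
      p x ^ α - ∫ ω, ((N x ω : ℝ) / n) ^ α ∂μ ≤ 2 / n ^ α := by
    intro x
    rw [hI x, hpα x, div_sub_div_same]
    constructor
    · apply div_nonneg _ hnα.le
      have := moment_upper (hlam x) hα0 hα1
      linarith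
    · exact (div_le_div_iff_of_pos_right hnα).mpr (moment_lower (hlam x) hα0 hα1)
  -- swap integral and finite sum
  have hswap : ∫ ω, (∑ x, ((N x ω : ℝ) / n) ^ α) ∂μ
      = ∑ x, ∫ ω, ((N x ω : ℝ) / n) ^ α ∂μ :=
    integral_finset_sum Finset.univ fun x _ => hint x
  constructor
  · rw [hswap]
    have he : ∑ x, ∫ ω, ((N x ω : ℝ) / n) ^ α ∂μ - ∑ x, p x ^ α
        = -∑ x, (p x ^ α - ∫ ω, ((N x ω : ℝ) / n) ^ α ∂μ) := by
      rw [← Finset.sum_sub_distrib]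
      rw [← Finset.sum_neg_distrib]
      exact Finset.sum_congr rfl fun x _ => by ring
    rw [he, abs_neg, abs_of_nonneg (Finset.sum_nonneg fun x _ => (hd x).1)]
    calc ∑ x, (p x ^ α - ∫ ω, ((N x ω : ℝ) / n) ^ α ∂μ)
        ≤ ∑ _x : X, 2 / n ^ α := Finset.sum_le_sum fun x _ => (hd x).2
      _ = (Fintype.card X : ℝ) * (2 / n ^ α) := by
          rw [Finset.sum_const, nsmul_eq_mul]; rfl
      _ = 2 * k / n ^ α := by rw [hk]; ring
  · have hP1 : (1:ℝ) ≤ ∑ x, p x ^ α := by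
      have hle : ∀ x : X, p x ≤ p x ^ α := by
        intro x
        rcases eq_or_lt_of_le (hp.1 x) with h | h
        · rw [← h, Real.zero_rpow hα0.ne']
        · have hx1 : p x ≤ 1 := by
            have := Finset.single_le_sum (f := p) (fun y _ => hp.1 y) (Finset.mem_univ x)
            rw [hp.2] at this; exact this
          have := Real.rpow_le_rpow_of_exponent_ge h hx1 hα1.le
          rwa [Real.rpow_one] at this
      calc (1:ℝ) = ∑ x, p x := hp.2.symm
        _ ≤ ∑ x, p x ^ α := Finset.sum_le_sum fun x _ => hle x
    have hkn : ((k : ℝ) ^ (1 / α) / n) ^ α = (k : ℝ) / n ^ α := by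
      rw [Real.div_rpow (Real.rpow_nonneg (Nat.cast_nonneg k) _) hn.le α,
        ← Real.rpow_mul (Nat.cast_nonneg k), one_div_mul_cancel hα0.ne', Real.rpow_one]
    rw [hkn]
    have hk0 : (0:ℝ) ≤ (k : ℝ) / n ^ α := div_nonneg (Nat.cast_nonneg k) hnα.le
    have h2 : 2 * (k:ℝ) / n ^ α = 2 * 1 * ((k:ℝ) / n ^ α) := by ring
    rw [h2, mul_assoc, mul_assoc]
    apply mul_le_mul_of_nonneg_left _ (by norm_num : (0:ℝ) ≤ 2)
    exact mul_le_mul_of_nonneg_right hP1 hk0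
end
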